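/- Let V ⊆ ℝ^n be a nonempty open subset, k ≥ 1, and let Λ^k denote the alternating k-multilinear real forms on ℝ^n (with Λ^0 = ℝ). For a map ω : V × V → Λ^k define F_k ω : V^{k+2} → ℝ by (F_k ω)(v, q_1, …, q_k, w) = (ω(v,w))(q_1 − v, …, q_k − v), and define the Koszul differential d^K_k by ((d^K_k ω)(v,w))(x_1, …, x_{k−1}) = (ω(v,w))(v − w, x_1, …, x_{k−1}). Then F is a chain map from the Koszul to the bar complex: d^X_k (F_k ω) = F_{k−1}(d^K_k ω), where (d^X_k χ)(v, q_1, …, q_{k−1}, w) = χ(v, v, q_1, …, q_{k−1}, w) + Σ_{i=1}^{k−1} (−1)^i χ(v, q_1, …, q_i, q_i, …, q_{k−1}, w) + (−1)^k χ(v, q_1, …, q_{k−1}, w, w) (for k = 1 one sets F_0 ω = ω as a function on V × V). -/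

import Mathlib

namespace Stmt18

/-- The bar differential `d^X_m` (functions with `m+2` slots to functions with `m+1`
slots): `(d^X χ)(x_0,…,x_m) = ∑_{i=0}^{m} (−1)^i χ(x_0,…,x_i,x_i,…,x_m)`. -/
def barD (n m : ℕ) (χ : (Fin (m+2) → (Fin n → ℝ)) → ℝ) :
    (Fin (m+1) → (Fin n → ℝ)) → ℝ :=
  fun x => ∑ i : Fin (m+1), ((-1 : ℤ) ^ (i : ℕ)) • χ (fun j =>
    if _h : (j : ℕ) ≤ (i : ℕ) then x ⟨(j : ℕ), by have := i.isLt; omega⟩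
    else x ⟨(j : ℕ) - 1, by have := j.isLt; omega⟩)

/-- The chain map `F_k` from the Koszul to the bar complex:
`(F_k ω)(v, q_1, …, q_k, w) = (ω(v,w))(q_1 − v, …, q_k − v)`, written for an arbitrary
family of `k`-argument forms `ω`. -/
def Fmap (n k : ℕ)
    (ω : (Fin n → ℝ) → (Fin n → ℝ) → ((Fin k → (Fin n → ℝ)) → ℝ)) :
    (Fin (k+2) → (Fin n → ℝ)) → ℝ :=
  fun x => ω (x 0) (x (Fin.last (k+1)))
    (fun l => x ⟨(l : ℕ) + 1, by have := l.isLt; omega⟩ - x 0)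

lemma key {n k : ℕ} (A : AlternatingMap ℝ (Fin n → ℝ) ℝ (Fin (k+1)))
    (g : Fin (k+1) → (Fin n → ℝ)) :
    A (Fin.cons (-(g (Fin.last k))) (fun l => g l.castSucc)) = ((-1 : ℤ) ^ (k+1)) • A g := by
  have h0 : (Fin.cons (-(g (Fin.last k))) (fun l => g l.castSucc) : Fin (k+1) → (Fin n → ℝ))
      = Function.update (Fin.cons (g (Fin.last k)) (fun l => g l.castSucc)) 0 (-(g (Fin.last k))) := by
    rw [Fin.update_cons_zero]
  have h1 : ((Fin.cons (g (Fin.last k)) (fun l => g l.castSucc) : Fin (k+1) → (Fin n → ℝ))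
      ∘ finRotate (k+1)) = g := by
    funext i
    induction i using Fin.lastCases with
    | last => simp [finRotate_succ_apply]
    | cast i =>
        rw [Function.comp_apply, finRotate_succ_apply, Fin.coeSucc_eq_succ, Fin.cons_succ]
  have h2 := AlternatingMap.map_perm A
      (Fin.cons (g (Fin.last k)) (fun l => g l.castSucc)) (finRotate (k+1))
  rw [h1, sign_finRotate] at h2
  rw [h0]
  rw [AlternatingMap.map_update_neg]
  rw [Fin.update_cons_zero]
  rw [h2]
  simp only [Units.smul_def, Units.val_neg, Units.val_pow_eq_pow_val, Units.coe_neg_one,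
    zsmul_eq_mul, Int.cast_pow, Int.cast_neg, Int.cast_one, smul_eq_mul, pow_succ,
    Int.cast_mul]
  ring_nf
  norm_num [Nat.mul_comm k 2, pow_mul]
  rw [mul_assoc, ← mul_pow]
  norm_num

/-- `F` is a chain map from the Koszul to the bar complex:
`d^X_{k+1} (F_{k+1} ω) = F_k (d^K_{k+1} ω)`, where
`((d^K ω)(v,w))(x_1,…,x_k) = (ω(v,w))(v−w, x_1, …, x_k)` is the Koszul differential. -/
theorem F_chain_map (n k : ℕ) (V : Set (Fin n → ℝ)) (hV : IsOpen V) (hne : V.Nonempty)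
    (ω : (Fin n → ℝ) → (Fin n → ℝ) → (AlternatingMap ℝ (Fin n → ℝ) ℝ (Fin (k+1)))) :
    ∀ x : Fin (k+2) → (Fin n → ℝ), (∀ i, x i ∈ V) →
      barD n (k+1) (Fmap n (k+1) (fun v w => ⇑(ω v w))) x
        = Fmap n k (fun v w y => ω v w (Fin.cons (v - w) y)) x := by
  intro x _
  simp only [barD, Fmap]
  rw [Finset.sum_eq_single_of_mem (Fin.last (k+1)) (Finset.mem_univ _)]
  · have hx0 : (x ⟨0, by omega⟩ : Fin n → ℝ) = x 0 := rfl
    have hkey := key (ω (x 0) (x (Fin.last (k+1))))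
      (fun l : Fin (k+1) => x ⟨(l : ℕ) + 1, by omega⟩ - x 0)
    simp only [Fin.val_last, Fin.val_zero, Nat.zero_le, dif_pos] at *
    rw [dif_neg (by omega)]
    have harg : (fun l : Fin (k+1) =>
        (if h : (l : ℕ) + 1 ≤ k + 1 then x ⟨(l : ℕ) + 1, by omega⟩
          else x ⟨(l : ℕ) + 1 - 1, by omega⟩) - x ⟨0, by omega⟩)
        = fun l : Fin (k+1) => x ⟨(l : ℕ) + 1, by omega⟩ - x 0 := by
      funext l
      rw [dif_pos (by omega), hx0]
    erw [harg]
    rw [show (x ⟨k + 1 + 1 - 1, by omega⟩ : Fin n → ℝ) = x (Fin.last (k+1)) from rfl]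
    erw [dif_pos (Nat.zero_le _)]
    rw [hx0, ← hkey]
    congr 1
    funext l
    induction l using Fin.cases with
    | zero =>
        simp only [Fin.cons_zero, neg_sub]
        rfl
    | succ i => simp [Fin.cons_succ]
  · intro b _ hb
    have hbv : (b : ℕ) < k + 1 := by
      have := b.isLt
      rcases Nat.lt_or_ge (b : ℕ) (k + 1) with h | h
      · exact h
      · exact absurd (Fin.ext (by rw [Fin.val_last]; omega) : b = Fin.last (k+1)) hb
    simp only [Fin.val_last, Fin.val_zero, Nat.zero_le, dif_pos]
    rw [dif_neg (by omega)]
    rcases Nat.eq_zero_or_pos (b : ℕ) with h0 | hpos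
    · rw [AlternatingMap.map_coord_zero _ (0 : Fin (k+1)), smul_zero]
      simp only [Fin.val_zero]
      erw [dif_neg (by omega)]
      exact sub_self _
    · obtain ⟨m, hm⟩ : ∃ m, (b : ℕ) = m + 1 := ⟨(b : ℕ) - 1, by omega⟩
      rw [AlternatingMap.map_eq_zero_of_eq _ _
        (i := ⟨m, by omega⟩) (j := ⟨m + 1, by omega⟩) ?_ ?_, smul_zero]
      · show (if h : m + 1 ≤ (b : ℕ) then _ else _) - _
            = (if h : m + 1 + 1 ≤ (b : ℕ) then _ else _) - _
        rw [dif_pos (by omega), dif_neg (by omega)]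
        rfl
      · exact fun h => by simpa using congrArg Fin.val h



end Stmt18
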